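/- arXiv:0804.4790 — 4 statements merged into one kernel-verified Lean document; each statement's English description precedes it below -/
import Mathlib

section
/- Let G be a group in which (a) whenever [a^p, b^q] = 1 for nonzero integers p, q, we have [a, b] = 1, and (b) whenever [a, b] = 1 and b = c a c⁻¹, we have a = b. If G has a presentation ⟨a, b ∣ a^n (a^p b^q)^k = 1⟩ with k, n, q nonzero integers, then G is abelian. -/
open FreeGroup
open scoped commutatorElement

/-- The single relator `a^n * (a^p * b^q)^k` in the free group on two generators,
where `a = FreeGroup.of true` and `b = FreeGroup.of false`. -/
def relStmt0 (n p q k : ℤ) : Set (FreeGroup Bool) :=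
  {FreeGroup.of true ^ n * (FreeGroup.of true ^ p * FreeGroup.of false ^ q) ^ k}

/-- let `G` be a group in which (a) `⁅a^p, b^q⁆ = 1` for nonzero integers
`p, q` implies `⁅a, b⁆ = 1`, and (b) `⁅a, b⁆ = 1` and `b = c * a * c⁻¹` imply `a = b`.
If `G` has a presentation `⟨a, b ∣ a^n (a^p b^q)^k = 1⟩` with `k, n, q` nonzero
integers, then `G` is abelian. -/
theorem stmt0 (G : Type*) [Group G]
    (ha : ∀ a b : G, ∀ p q : ℤ, p ≠ 0 → q ≠ 0 → ⁅a ^ p, b ^ q⁆ = 1 → ⁅a, b⁆ = 1)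
    (hb : ∀ a b c : G, ⁅a, b⁆ = 1 → b = c * a * c⁻¹ → a = b)
    (n p q k : ℤ) (hk : k ≠ 0) (hn : n ≠ 0) (hq : q ≠ 0)
    (φ : PresentedGroup (relStmt0 n p q k) ≃* G) :
    ∀ x y : G, x * y = y * x := by
  set A : G := φ (PresentedGroup.of true) with hA
  set B : G := φ (PresentedGroup.of false) with hB
  -- the relation holds in G
  have hrel0 : (PresentedGroup.of true ^ n *
      (PresentedGroup.of true ^ p * PresentedGroup.of false ^ q) ^ k :
      PresentedGroup (relStmt0 n p q k)) = 1 := by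
    have hmem : (FreeGroup.of true ^ n * (FreeGroup.of true ^ p * FreeGroup.of false ^ q) ^ k)
        ∈ Subgroup.normalClosure (relStmt0 n p q k) :=
      Subgroup.subset_normalClosure rfl
    have : PresentedGroup.mk (relStmt0 n p q k)
        (FreeGroup.of true ^ n * (FreeGroup.of true ^ p * FreeGroup.of false ^ q) ^ k) = 1 :=
      (QuotientGroup.eq_one_iff _).2 hmem
    simpa [PresentedGroup.of, _root_.map_mul, map_zpow] using this
  have hrel : A ^ n * (A ^ p * B ^ q) ^ k = 1 := by
    have := congrArg φ hrel0
    simpa [_root_.map_mul, map_zpow] using this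
  -- (A^p B^q)^k = A^(-n), so it commutes with A^n
  have h1 : (A ^ p * B ^ q) ^ k = A ^ (-n) := by
    rw [zpow_neg]
    exact eq_inv_of_mul_eq_one_right hrel
  have hcomm1 : ⁅(A ^ p * B ^ q) ^ k, A ^ n⁆ = 1 := by
    rw [h1]
    exact commutatorElement_eq_one_iff_mul_comm.2
      (by rw [← zpow_add, ← zpow_add, add_comm])
  have hcA : ⁅A ^ p * B ^ q, A⁆ = 1 := by
    have := ha (A ^ p * B ^ q) A k n hk hn (by simpa using hcomm1)
    simpa using this
  -- hence B^q commutes with A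
  have hBqA : ⁅B ^ q, A⁆ = 1 := by
    have h1' : (A ^ p * B ^ q) * A = A * (A ^ p * B ^ q) :=
      commutatorElement_eq_one_iff_mul_comm.1 hcA
    refine commutatorElement_eq_one_iff_mul_comm.2 ?_
    calc B ^ q * A = A ^ (-p) * (A ^ p * B ^ q * A) := by group
      _ = A ^ (-p) * (A * (A ^ p * B ^ q)) := by rw [h1']
      _ = A * B ^ q := by group
  have hBA : ⁅B, A⁆ = 1 := by
    have := ha B A q 1 hq one_ne_zero (by simpa using hBqA)
    exact this
  have hABcomm : A * B = B * A := (commutatorElement_eq_one_iff_mul_comm.1 hBA).symm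
  -- G is generated by A and B
  have hgen : Subgroup.closure ({A, B} : Set G) = ⊤ := by
    have h1 : Subgroup.closure (Set.range
        (PresentedGroup.of : Bool → PresentedGroup (relStmt0 n p q k))) = ⊤ :=
      PresentedGroup.closure_range_of _
    have h2 : (φ : PresentedGroup (relStmt0 n p q k) →* G).range = ⊤ :=
      MonoidHom.range_eq_top_of_surjective _ φ.surjective
    have h3 : Subgroup.closure ((φ : PresentedGroup (relStmt0 n p q k) →* G) ''
        Set.range (PresentedGroup.of : Bool → PresentedGroup (relStmt0 n p q k))) = ⊤ := by
      rw [← MonoidHom.map_closure, h1]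
      simpa [← MonoidHom.range_eq_map] using h2
    have h4 : ((φ : PresentedGroup (relStmt0 n p q k) →* G) ''
        Set.range (PresentedGroup.of : Bool → PresentedGroup (relStmt0 n p q k)))
        = {A, B} := by
      rw [← Set.range_comp]
      ext x
      simp only [Set.mem_range, Function.comp_apply, Set.mem_insert_iff, Set.mem_singleton_iff]
      constructor
      · rintro ⟨(b | b), rfl⟩
        · right; rfl
        · left; rfl
      · rintro (rfl | rfl)
        · exact ⟨true, rfl⟩
        · exact ⟨false, rfl⟩
    rw [← h4]; exact h3
  -- every element of G is a product of A's and B's, all of which commute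
  intro x y
  have key : ∀ z : G, z * A = A * z ∧ z * B = B * z := by
    intro z
    have hz : z ∈ Subgroup.closure ({A, B} : Set G) := hgen ▸ Subgroup.mem_top z
    induction hz using Subgroup.closure_induction with
    | mem w hw =>
      rcases hw with rfl | rfl
      · exact ⟨rfl, hABcomm⟩
      · exact ⟨hABcomm.symm, rfl⟩
    | one => simp
    | mul u v _ _ hu hv =>
      constructor
      · rw [mul_assoc, hv.1, ← mul_assoc, hu.1, mul_assoc]
      · rw [mul_assoc, hv.2, ← mul_assoc, hu.2, mul_assoc]
    | inv u _ hu =>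
      constructor
      · calc u⁻¹ * A = u⁻¹ * (A * u) * u⁻¹ := by group
          _ = u⁻¹ * (u * A) * u⁻¹ := by rw [← hu.1]
          _ = A * u⁻¹ := by group
      · calc u⁻¹ * B = u⁻¹ * (B * u) * u⁻¹ := by group
          _ = u⁻¹ * (u * B) * u⁻¹ := by rw [← hu.2]
          _ = B * u⁻¹ := by group
  have key2 : ∀ z w : G, w ∈ Subgroup.closure ({A, B} : Set G) → z * w = w * z := by
    intro z w hw
    induction hw using Subgroup.closure_induction with
    | mem v hv =>
      rcases hv with rfl | rfl
      · exact (key z).1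
      · exact (key z).2
    | one => simp
    | mul u v _ _ hu hv => rw [mul_assoc, ← hv, ← mul_assoc, hu, mul_assoc]
    | inv u _ hu =>
      calc z * u⁻¹ = u⁻¹ * (u * z) * u⁻¹ := by group
        _ = u⁻¹ * (z * u) * u⁻¹ := by rw [← hu]
        _ = u⁻¹ * z := by group
  exact key2 x y (hgen ▸ Subgroup.mem_top y)
end

section
/- Let G be a group in which (a) whenever [a^p, b^q] = 1 for nonzero integers p, q, we have [a, b] = 1, and (b) whenever [a, b] = 1 and b = c a c⁻¹, we have a = b. If G has a presentation ⟨a, b ∣ a² b⁻¹ a⁻¹ b² a⁻¹ b⁻¹ = 1⟩, then G is abelian. -/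
open FreeGroup
open scoped commutatorElement

/-- The single relator `a² b⁻¹ a⁻¹ b² a⁻¹ b⁻¹` in the free group on two generators,
where `a = FreeGroup.of true` and `b = FreeGroup.of false`. -/
def relStmt1 : Set (FreeGroup Bool) :=
  {FreeGroup.of true ^ 2 * (FreeGroup.of false)⁻¹ * (FreeGroup.of true)⁻¹ *
    FreeGroup.of false ^ 2 * (FreeGroup.of true)⁻¹ * (FreeGroup.of false)⁻¹}

/-- let `G` be a group in which (a) `⁅a^p, b^q⁆ = 1` for nonzero integers
`p, q` implies `⁅a, b⁆ = 1`, and (b) `⁅a, b⁆ = 1` and `b = c * a * c⁻¹` imply `a = b`.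
If `G` has a presentation `⟨a, b ∣ a² b⁻¹ a⁻¹ b² a⁻¹ b⁻¹ = 1⟩`, then `G` is abelian. -/
theorem stmt1 (G : Type*) [Group G]
    (ha : ∀ a b : G, ∀ p q : ℤ, p ≠ 0 → q ≠ 0 → ⁅a ^ p, b ^ q⁆ = 1 → ⁅a, b⁆ = 1)
    (hb : ∀ a b c : G, ⁅a, b⁆ = 1 → b = c * a * c⁻¹ → a = b)
    (φ : PresentedGroup relStmt1 ≃* G) :
    ∀ x y : G, x * y = y * x := by
  set A : G := φ (PresentedGroup.of true) with hA
  set B : G := φ (PresentedGroup.of false) with hB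
  -- the relator holds in G
  have hrel : A ^ 2 * B⁻¹ * A⁻¹ * B ^ 2 * A⁻¹ * B⁻¹ = 1 := by
    have h1 : (QuotientGroup.mk (FreeGroup.of true ^ 2 * (FreeGroup.of false)⁻¹ *
        (FreeGroup.of true)⁻¹ * FreeGroup.of false ^ 2 * (FreeGroup.of true)⁻¹ *
        (FreeGroup.of false)⁻¹) : PresentedGroup relStmt1) = 1 := by
      rw [QuotientGroup.eq_one_iff]
      exact Subgroup.subset_normalClosure rfl
    have h2 := congrArg φ h1
    change φ (PresentedGroup.mk relStmt1 (FreeGroup.of true ^ 2 * (FreeGroup.of false)⁻¹ *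
        (FreeGroup.of true)⁻¹ * FreeGroup.of false ^ 2 * (FreeGroup.of true)⁻¹ *
        (FreeGroup.of false)⁻¹)) = φ 1 at h2
    simpa [hA, hB, _root_.map_mul, _root_.map_inv, map_pow, PresentedGroup.of,
      QuotientGroup.mk_mul, QuotientGroup.mk_inv, QuotientGroup.mk_pow] using h2
  -- the generators commute
  have hab : A * B = B * A := by
    rw [pow_two, pow_two] at hrel
    have hcomm : ⁅A * B⁻¹, A * (A * B⁻¹) * A⁻¹⁆ = 1 := by
      have : ⁅A * B⁻¹, A * (A * B⁻¹) * A⁻¹⁆ =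
          (A * B⁻¹) * (A * A * B⁻¹ * A⁻¹ * (B * B) * A⁻¹ * B⁻¹) * (A * B⁻¹)⁻¹ := by
        rw [commutatorElement_def]; group
      rw [this, hrel]; group
    have heq := hb (A * B⁻¹) (A * (A * B⁻¹) * A⁻¹) A hcomm rfl
    have h1 : A * (A * B⁻¹) = (A * B⁻¹) * A := mul_inv_eq_iff_eq_mul.mp heq.symm
    have h2 : A * B⁻¹ = B⁻¹ * A := mul_left_cancel (h1.trans (mul_assoc _ _ _))
    have h3 : A = B⁻¹ * (A * B) := by rw [← mul_assoc, ← h2]; group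
    exact (eq_inv_mul_iff_mul_eq.mp h3).symm
  -- G is generated by A and B
  set f : FreeGroup Bool →* G :=
    φ.toMonoidHom.comp (QuotientGroup.mk' (Subgroup.normalClosure relStmt1)) with hf
  have hfsurj : Function.Surjective f := by
    exact φ.surjective.comp (QuotientGroup.mk'_surjective _)
  have himg : f '' Set.range FreeGroup.of = {A, B} := by
    ext x
    simp only [Set.mem_image, Set.mem_range, Set.mem_insert_iff, Set.mem_singleton_iff]
    constructor
    · rintro ⟨y, ⟨b, rfl⟩, rfl⟩
      cases b
      · right; rfl
      · left; rfl
    · rintro (rfl | rfl)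
      · exact ⟨FreeGroup.of true, ⟨true, rfl⟩, rfl⟩
      · exact ⟨FreeGroup.of false, ⟨false, rfl⟩, rfl⟩
  have htop : Subgroup.closure ({A, B} : Set G) = ⊤ := by
    rw [← himg, ← MonoidHom.map_closure, FreeGroup.closure_range_of,
      ← MonoidHom.range_eq_map]
    exact MonoidHom.range_eq_top_of_surjective f hfsurj
  -- everything commutes with A and B
  have hcentral : ∀ x : G, ∀ g ∈ ({A, B} : Set G), g * x = x * g := by
    intro x
    have hx : x ∈ Subgroup.closure ({A, B} : Set G) := htop ▸ Subgroup.mem_top x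
    have : x ∈ Subgroup.centralizer ({A, B} : Set G) := by
      refine (Subgroup.closure_le (Subgroup.centralizer _)).mpr ?_ hx
      rintro g (rfl | rfl) <;>
        · simp only [SetLike.mem_coe, Subgroup.mem_centralizer_iff]
          rintro h (rfl | rfl) <;> simp [hab]
    exact Subgroup.mem_centralizer_iff.mp this
  -- therefore A, B are central, so the center is everything
  intro x y
  have hy : y ∈ Subgroup.closure ({A, B} : Set G) := htop ▸ Subgroup.mem_top y
  have : y ∈ Subgroup.center G := by
    refine (Subgroup.closure_le (Subgroup.center G)).mpr ?_ hy
    rintro g (rfl | rfl) <;>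
      · simp only [SetLike.mem_coe, Subgroup.mem_center_iff]
        intro h
        exact (hcentral h _ (by simp)).symm
  exact Subgroup.mem_center_iff.mp this x
end

section
/- Let H be the group ⟨x, y ∣ x^a = y^b⟩ with a, b ≥ 2. Then the center of H is the cyclic subgroup generated by x^a (= y^b), and H modulo its center is isomorphic to the free product Z/a * Z/b. -/
/-- The presentation `⟨x, y ∣ x^a = y^b⟩` (`x = of true`, `y = of false`). -/
def torusRel (a b : ℕ) : Set (FreeGroup Bool) :=
  {FreeGroup.of true ^ a * (FreeGroup.of false ^ b)⁻¹}

/-- The presentation `⟨x, y ∣ x^a, y^b⟩` of the free product `ℤ/a * ℤ/b`. -/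
def freeProdRel (a b : ℕ) : Set (FreeGroup Bool) :=
  {FreeGroup.of true ^ a, FreeGroup.of false ^ b}

open Monoid Monoid.CoprodI

namespace Stmt16Aux

set_option linter.unusedSectionVars false



variable {ι : Type*} [DecidableEq ι] {M : ι → Type*} [∀ i, Group (M i)]
  [∀ i, DecidableEq (M i)]

lemma equiv_apply (g : CoprodI M) : Word.equiv g = g • Word.empty := rfl

lemma equiv_prod (w : Word M) : Word.equiv (w.prod) = w :=
  Word.equiv.apply_symm_apply w

lemma equiv_one : Word.equiv (1 : CoprodI M) = Word.empty := by
  rw [equiv_apply, one_smul]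

lemma equiv_neprod {i j} (w : NeWord M i j) : Word.equiv w.prod = w.toWord :=
  equiv_prod w.toWord

lemma neword_index_eq {i j k l} (w₁ : NeWord M i j) (w₂ : NeWord M k l)
    (h : w₁.prod = w₂.prod) : i = k ∧ j = l := by
  have ht : w₁.toWord = w₂.toWord := by
    rw [← equiv_neprod w₁, ← equiv_neprod w₂, h]
  have hl : w₁.toList = w₂.toList := congrArg Word.toList ht
  have h1 := w₁.toList_head?
  have h2 := w₂.toList_head?
  rw [hl, h2] at h1
  have h3 := w₁.toList_getLast?
  have h4 := w₂.toList_getLast?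
  rw [hl, h4] at h3
  exact ⟨(Sigma.mk.inj_iff.1 (Option.some.inj h1.symm)).1,
    (Sigma.mk.inj_iff.1 (Option.some.inj h3.symm)).1⟩

/-- length of the normal form -/
def len (g : CoprodI M) : ℕ := (Word.equiv g).toList.length

lemma len_one : len (1 : CoprodI M) = 0 := by
  rw [len, equiv_one]; rfl

lemma len_neprod {i j} (w : NeWord M i j) : len w.prod = w.toList.length := by
  rw [len, equiv_neprod]; rfl

lemma exists_neword {g : CoprodI M} (hg : g ≠ 1) :
    ∃ (i j : ι) (w : NeWord M i j), w.prod = g := by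
  have hne : Word.equiv g ≠ Word.empty := by
    intro h
    apply hg
    have := Word.equiv.symm_apply_apply g
    rw [h] at this
    exact this.symm
  obtain ⟨i, j, w', hw⟩ := NeWord.of_word _ hne
  refine ⟨i, j, w', ?_⟩
  have : w'.prod = (Word.equiv g).prod := by rw [NeWord.prod, hw]
  rw [this]
  exact Word.equiv.symm_apply_apply g

lemma len_toList_inv {G : ι → Type*} [∀ i, Group (G i)] {i j} (w : NeWord G i j) :
    w.inv.toList.length = w.toList.length := by
  induction w with
  | singleton x h => rfl
  | append w₁ hne w₂ ih₁ ih₂ => simp [NeWord.inv, ih₁, ih₂, Nat.add_comm]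

lemma len_inv (g : CoprodI M) : len g⁻¹ = len g := by
  rcases eq_or_ne g 1 with rfl | hg
  · rw [inv_one]
  · obtain ⟨i, j, w, rfl⟩ := exists_neword hg
    rw [← NeWord.inv_prod, len_neprod, len_neprod, len_toList_inv]

lemma length_rcons_le {i} (p : Word.Pair M i) :
    (Word.rcons p).toList.length ≤ p.tail.toList.length + 1 := by
  rw [Word.rcons]
  split_ifs <;> simp [Word.cons]

lemma tail_length_le_rcons {i} (p : Word.Pair M i) :
    p.tail.toList.length ≤ (Word.rcons p).toList.length := by
  rw [Word.rcons]
  split_ifs <;> simp [Word.cons]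

lemma len_of_mul_le {k} (m : M k) (g : CoprodI M) :
    len (CoprodI.of m * g) ≤ len g + 1 := by
  have heq : Word.equiv (CoprodI.of m * g) = CoprodI.of m • Word.equiv g := by
    rw [equiv_apply, equiv_apply, mul_smul]
  rw [len, heq, Word.of_smul_def]
  have h1 : (Word.equivPair k (Word.equiv g)).tail.toList.length ≤
      (Word.equiv g).toList.length := by
    have hw : Word.rcons (Word.equivPair k (Word.equiv g)) = Word.equiv g := by
      rw [← Word.equivPair_symm]
      exact (Word.equivPair k).symm_apply_apply _
    calc (Word.equivPair k (Word.equiv g)).tail.toList.length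
        ≤ (Word.rcons (Word.equivPair k (Word.equiv g))).toList.length :=
          tail_length_le_rcons _
      _ = (Word.equiv g).toList.length := by rw [hw]
  refine le_trans (length_rcons_le _) ?_
  exact Nat.add_le_add_right h1 1

lemma len_mul_neprod_le {i j} (w : NeWord M i j) (x : CoprodI M) :
    len (x * w.prod) ≤ len x + w.toList.length := by
  induction w generalizing x with
  | singleton y hy =>
    rw [NeWord.prod_singleton]
    have : x * CoprodI.of y = (CoprodI.of y⁻¹ * x⁻¹)⁻¹ := by
      rw [mul_inv_rev, inv_inv, map_inv, inv_inv]
    rw [this, len_inv]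
    calc len (CoprodI.of y⁻¹ * x⁻¹) ≤ len x⁻¹ + 1 := len_of_mul_le _ _
      _ = len x + 1 := by rw [len_inv]
    -- toList length of singleton is 1
  | append w₁ hne w₂ ih₁ ih₂ =>
    rw [NeWord.append_prod, ← mul_assoc]
    calc len (x * w₁.prod * w₂.prod) ≤ len (x * w₁.prod) + w₂.toList.length := ih₂ _
      _ ≤ len x + w₁.toList.length + w₂.toList.length := by
          have := ih₁ x; omega
      _ = len x + (NeWord.append w₁ hne w₂).toList.length := by
          simp [Nat.add_assoc]

lemma len_of_mul_head_le {k l} (w : NeWord M k l) : ∀ (m : M k),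
    len (CoprodI.of m * w.prod) ≤ w.toList.length := by
  induction w with
  | singleton x hx =>
    intro m
    rw [NeWord.prod_singleton, ← map_mul]
    rcases eq_or_ne (m * x) 1 with h | h
    · rw [h, map_one, len_one]; simp
    · have : CoprodI.of (m * x) = (NeWord.singleton (m * x) h).prod :=
        (NeWord.prod_singleton _ _).symm
      rw [this, len_neprod]
      simp
  | append w₁ hne w₂ ih₁ ih₂ =>
    intro m
    rw [NeWord.append_prod, ← mul_assoc]
    calc len (CoprodI.of m * w₁.prod * w₂.prod)
        ≤ len (CoprodI.of m * w₁.prod) + w₂.toList.length := len_mul_neprod_le _ _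
      _ ≤ w₁.toList.length + w₂.toList.length := by have := ih₁ m; omega
      _ = (NeWord.append w₁ hne w₂).toList.length := by simp

theorem coprodI_central_eq_one (hι : ∀ i : ι, ∃ j, j ≠ i)
    (hM : ∀ i, ∃ m : M i, m ≠ 1) {g : CoprodI M}
    (hg : ∀ x, x * g = g * x) : g = 1 := by
  by_contra hg1
  obtain ⟨i, j, w, hw⟩ := exists_neword hg1
  rcases eq_or_ne i j with rfl | hij
  · -- word starts and ends at same index i; prepend/append a letter from k ≠ i
    obtain ⟨k, hk⟩ := hι i
    obtain ⟨m, hm⟩ := hM k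
    have h1 : (NeWord.append (NeWord.singleton m hm) hk w).prod = CoprodI.of m * g := by
      rw [NeWord.append_prod, NeWord.prod_singleton, hw]
    have h2 : (NeWord.append w (Ne.symm hk) (NeWord.singleton m hm)).prod
        = CoprodI.of m * g := by
      rw [NeWord.append_prod, NeWord.prod_singleton, hw, hg (CoprodI.of m)]
    have := (neword_index_eq _ _ (h1.trans h2.symm)).1
    exact hk this
  · -- word starts at i, ends at j ≠ i; use length argument
    obtain ⟨m, hm⟩ := hM j
    have h1 : len (CoprodI.of m * g) = w.toList.length + 1 := by
      have : (NeWord.append (NeWord.singleton m hm) hij.symm w).prod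
          = CoprodI.of m * g := by
        rw [NeWord.append_prod, NeWord.prod_singleton, hw]
      rw [← this, len_neprod]
      simp [Nat.add_comm]
    have h2 : len (g * CoprodI.of m) ≤ w.toList.length := by
      have hinv : g * CoprodI.of m = (CoprodI.of m⁻¹ * g⁻¹)⁻¹ := by
        rw [mul_inv_rev, inv_inv, map_inv, inv_inv]
      rw [hinv, len_inv]
      have hginv : g⁻¹ = w.inv.prod := by rw [NeWord.inv_prod, hw]
      rw [hginv]
      calc len (CoprodI.of m⁻¹ * w.inv.prod) ≤ w.inv.toList.length :=
            len_of_mul_head_le _ _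
        _ = w.toList.length := len_toList_inv _
    rw [← hg (CoprodI.of m)] at h2
    omega



/-- Hom out of `Multiplicative (ZMod n)` from an element of order dividing `n`. -/
def zmodHom {Q : Type*} [Group Q] (n : ℕ) (x : Q) (hx : x ^ n = 1) :
    Multiplicative (ZMod n) →* Q :=
  AddMonoidHom.toMultiplicativeLeft
    (ZMod.lift n ⟨zmultiplesHom (Additive Q) (Additive.ofMul x), by
      show (n : ℤ) • Additive.ofMul x = 0
      rw [← ofMul_zpow, zpow_natCast, hx, ofMul_one]⟩)

lemma zmodHom_one {Q : Type*} [Group Q] (n : ℕ) (x : Q) (hx : x ^ n = 1) :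
    zmodHom n x hx (Multiplicative.ofAdd (1 : ZMod n)) = x := by
  have h1 : (1 : ZMod n) = ((1 : ℤ) : ZMod n) := by norm_cast
  rw [zmodHom]
  simp only [AddMonoidHom.coe_toMultiplicativeLeft, Function.comp_apply, toAdd_ofAdd]
  rw [h1, ZMod.lift_coe]
  simp

lemma mhom_ext {n : ℕ} [NeZero n] {Q : Type*} [Monoid Q]
    {f g : Multiplicative (ZMod n) →* Q}
    (h : f (Multiplicative.ofAdd (1 : ZMod n)) = g (Multiplicative.ofAdd (1 : ZMod n))) :
    f = g := by
  refine MonoidHom.ext fun c => ?_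
  have hc : c = (Multiplicative.ofAdd (1 : ZMod n)) ^ ZMod.val (Multiplicative.toAdd c) := by
    rw [← ofAdd_nsmul]
    rw [nsmul_eq_mul, mul_one, ZMod.natCast_val, ZMod.cast_id]
    rfl
  rw [hc, map_pow, map_pow, h]




open Monoid

variable (a b : ℕ)

lemma q_pow_true :
    (PresentedGroup.of true : PresentedGroup (freeProdRel a b)) ^ a = 1 := by
  show (PresentedGroup.mk (freeProdRel a b) (FreeGroup.of true)) ^ a = 1
  rw [← map_pow]
  exact (QuotientGroup.eq_one_iff _).2
    (Subgroup.subset_normalClosure (Set.mem_insert _ _))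

lemma q_pow_false :
    (PresentedGroup.of false : PresentedGroup (freeProdRel a b)) ^ b = 1 := by
  show (PresentedGroup.mk (freeProdRel a b) (FreeGroup.of false)) ^ b = 1
  rw [← map_pow]
  exact (QuotientGroup.eq_one_iff _).2
    (Subgroup.subset_normalClosure (Set.mem_insert_iff.2 (Or.inr rfl)))

lemma g_rel :
    (PresentedGroup.of true : PresentedGroup (torusRel a b)) ^ a =
      PresentedGroup.of false ^ b := by
  have h : (PresentedGroup.mk (torusRel a b))
      (FreeGroup.of true ^ a * (FreeGroup.of false ^ b)⁻¹) = 1 :=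
    (QuotientGroup.eq_one_iff _).2 (Subgroup.subset_normalClosure rfl)
  rw [map_mul, map_inv, map_pow, map_pow] at h
  exact mul_inv_eq_one.1 h

lemma g_central :
    (PresentedGroup.of true : PresentedGroup (torusRel a b)) ^ a ∈
      Subgroup.center (PresentedGroup (torusRel a b)) := by
  rw [Subgroup.mem_center_iff]
  intro g
  have hgen : g ∈ Subgroup.closure
      (Set.range (PresentedGroup.of : Bool → PresentedGroup (torusRel a b))) := by
    rw [PresentedGroup.closure_range_of]; trivial
  refine Subgroup.closure_induction ?_ ?_ ?_ ?_ hgen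
  · rintro x ⟨i, rfl⟩
    cases i
    · show Commute _ _
      rw [g_rel]
      exact (Commute.refl _).pow_right b
    · show Commute _ _
      exact (Commute.refl _).pow_right a
  · simp
  · intro x y _ _ hx hy
    exact (Commute.mul_left hx hy :)
  · intro x _ hx
    exact ((Commute.inv_left hx) :)

/-- The central subgroup generated by `x^a`. -/
def NN : Subgroup (PresentedGroup (torusRel a b)) :=
  Subgroup.zpowers ((PresentedGroup.of true : PresentedGroup (torusRel a b)) ^ a)

lemma NN_le_center : NN a b ≤ Subgroup.center (PresentedGroup (torusRel a b)) :=
  Subgroup.zpowers_le.2 (g_central a b)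

instance : (NN a b).Normal := by
  constructor
  intro n hn g
  have hc := Subgroup.mem_center_iff.1 (NN_le_center a b hn) g
  rw [hc, mul_assoc, mul_inv_cancel, mul_one]
  exact hn

def phi : PresentedGroup (torusRel a b) →* PresentedGroup (freeProdRel a b) :=
  PresentedGroup.toGroup (f := fun i => (PresentedGroup.of i : PresentedGroup (freeProdRel a b)))
    (by
      rintro r hr
      rw [torusRel, Set.mem_singleton_iff] at hr
      subst hr
      simp [FreeGroup.lift_apply_of, q_pow_true, q_pow_false])

def psi : PresentedGroup (freeProdRel a b) →*
    (PresentedGroup (torusRel a b) ⧸ NN a b) :=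
  PresentedGroup.toGroup
    (f := fun i => ((PresentedGroup.of i : PresentedGroup (torusRel a b)) :
      PresentedGroup (torusRel a b) ⧸ NN a b))
    (by
      intro r hr
      simp only [freeProdRel, Set.mem_insert_iff, Set.mem_singleton_iff] at hr
      rcases hr with rfl | rfl
      · rw [map_pow, FreeGroup.lift_apply_of, ← QuotientGroup.mk_pow]
        exact (QuotientGroup.eq_one_iff _).2 (Subgroup.mem_zpowers _)
      · rw [map_pow, FreeGroup.lift_apply_of, ← QuotientGroup.mk_pow, ← g_rel]
        exact (QuotientGroup.eq_one_iff _).2 (Subgroup.mem_zpowers _))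

lemma NN_le_ker : NN a b ≤ (phi a b).ker := by
  intro n hn
  obtain ⟨k, rfl⟩ := Subgroup.mem_zpowers_iff.1 hn
  rw [MonoidHom.mem_ker, map_zpow, map_pow, phi, PresentedGroup.toGroup.of,
    q_pow_true, one_zpow]

def phibar : (PresentedGroup (torusRel a b) ⧸ NN a b) →*
    PresentedGroup (freeProdRel a b) :=
  QuotientGroup.lift (NN a b) (phi a b) (NN_le_ker a b)

lemma phibar_comp_psi : (phibar a b).comp (psi a b) = MonoidHom.id _ := by
  apply PresentedGroup.ext
  intro x
  simp [psi, phibar, phi, PresentedGroup.toGroup.of, QuotientGroup.lift_mk]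

lemma psi_comp_phibar : (psi a b).comp (phibar a b) = MonoidHom.id _ := by
  apply QuotientGroup.monoidHom_ext
  apply PresentedGroup.ext
  intro x
  simp [psi, phibar, phi, PresentedGroup.toGroup.of, QuotientGroup.lift_mk]

def e0 : (PresentedGroup (torusRel a b) ⧸ NN a b) ≃* PresentedGroup (freeProdRel a b) :=
  MonoidHom.toMulEquiv (phibar a b) (psi a b) (psi_comp_phibar a b) (phibar_comp_psi a b)


/-- The family `i ↦ ℤ/(cond i a b)` (multiplicative). -/
abbrev Fam (a b : ℕ) : Bool → Type := fun i => Multiplicative (ZMod (cond i a b))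

def fwd : PresentedGroup (freeProdRel a b) →* CoprodI (Fam a b) :=
  PresentedGroup.toGroup
    (f := fun i => CoprodI.of (M := Fam a b) (Multiplicative.ofAdd (1 : ZMod (cond i a b))))
    (by
      intro r hr
      simp only [freeProdRel, Set.mem_insert_iff, Set.mem_singleton_iff] at hr
      rcases hr with rfl | rfl
      · rw [map_pow, FreeGroup.lift_apply_of, ← map_pow]
        have h1 : (Multiplicative.ofAdd (1 : ZMod (cond true a b))) ^ a = 1 := by
          show (Multiplicative.ofAdd (1 : ZMod a)) ^ a = 1
          rw [← ofAdd_nsmul, nsmul_eq_mul, mul_one, ZMod.natCast_self, ofAdd_zero]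
        rw [h1, map_one]
      · rw [map_pow, FreeGroup.lift_apply_of, ← map_pow]
        have h1 : (Multiplicative.ofAdd (1 : ZMod (cond false a b))) ^ b = 1 := by
          show (Multiplicative.ofAdd (1 : ZMod b)) ^ b = 1
          rw [← ofAdd_nsmul, nsmul_eq_mul, mul_one, ZMod.natCast_self, ofAdd_zero]
        rw [h1, map_one])

def bwd : CoprodI (Fam a b) →* PresentedGroup (freeProdRel a b) :=
  CoprodI.lift (fun i => zmodHom (cond i a b)
    (PresentedGroup.of i : PresentedGroup (freeProdRel a b))
    (match i with
      | true => q_pow_true a b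
      | false => q_pow_false a b))

lemma bwd_comp_fwd : (bwd a b).comp (fwd a b) = MonoidHom.id _ := by
  apply PresentedGroup.ext
  intro x
  simp only [MonoidHom.comp_apply, MonoidHom.id_apply, fwd, PresentedGroup.toGroup.of,
    bwd, CoprodI.lift_of]
  exact zmodHom_one _ _ _

lemma fwd_comp_bwd (ha : 2 ≤ a) (hb : 2 ≤ b) :
    (fwd a b).comp (bwd a b) = MonoidHom.id _ := by
  apply CoprodI.ext_hom
  intro i
  haveI : NeZero (cond i a b) := by
    cases i
    · exact ⟨show b ≠ 0 by omega⟩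
    · exact ⟨show a ≠ 0 by omega⟩
  apply mhom_ext
  simp only [MonoidHom.comp_apply, MonoidHom.id_apply, bwd, CoprodI.lift_of]
  rw [zmodHom_one]
  simp only [fwd, PresentedGroup.toGroup.of]

def theta (ha : 2 ≤ a) (hb : 2 ≤ b) :
    PresentedGroup (freeProdRel a b) ≃* CoprodI (Fam a b) :=
  MonoidHom.toMulEquiv (fwd a b) (bwd a b) (bwd_comp_fwd a b) (fwd_comp_bwd a b ha hb)

lemma center_Q_trivial (ha : 2 ≤ a) (hb : 2 ≤ b) (q : PresentedGroup (freeProdRel a b))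
    (hq : q ∈ Subgroup.center (PresentedGroup (freeProdRel a b))) : q = 1 := by
  haveI : Fact (1 < a) := ⟨by omega⟩
  haveI : Fact (1 < b) := ⟨by omega⟩
  set t := theta a b ha hb with ht
  have hcent : ∀ x : CoprodI (Fam a b), x * t q = t q * x := by
    intro x
    have h1 := Subgroup.mem_center_iff.1 hq (t.symm x)
    calc x * t q = t (t.symm x) * t q := by rw [MulEquiv.apply_symm_apply]
      _ = t (t.symm x * q) := by rw [map_mul]
      _ = t (q * t.symm x) := by rw [h1]
      _ = t q * t (t.symm x) := by rw [map_mul]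
      _ = t q * x := by rw [MulEquiv.apply_symm_apply]
  have hM : ∀ i : Bool, ∃ m : Fam a b i, m ≠ 1 := by
    intro i
    refine ⟨Multiplicative.ofAdd 1, ?_⟩
    rw [Ne, ofAdd_eq_one]
    cases i
    · exact (show (1 : ZMod b) ≠ 0 from one_ne_zero)
    · exact (show (1 : ZMod a) ≠ 0 from one_ne_zero)
  have h2 : t q = 1 :=
    coprodI_central_eq_one (fun i => ⟨!i, by cases i <;> simp⟩) hM hcent
  have := congrArg t.symm h2
  rwa [MulEquiv.symm_apply_apply, map_one] at this

end Stmt16Aux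

open Stmt16Aux in
/-- for `a, b ≥ 2`, the center of `H = ⟨x, y ∣ x^a = y^b⟩` is the cyclic
subgroup generated by `x^a` (= `y^b`), and `H` modulo its center is isomorphic to the
free product `ℤ/a * ℤ/b`. -/
theorem stmt16 (a b : ℕ) (ha : 2 ≤ a) (hb : 2 ≤ b) :
    Subgroup.center (PresentedGroup (torusRel a b)) =
      Subgroup.zpowers ((PresentedGroup.of true : PresentedGroup (torusRel a b)) ^ a) ∧
    Nonempty ((PresentedGroup (torusRel a b) ⧸
        Subgroup.center (PresentedGroup (torusRel a b))) ≃*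
      PresentedGroup (freeProdRel a b)) := by
  have hsurj : Function.Surjective (phi a b) := by
    intro q
    obtain ⟨p, hp⟩ := (e0 a b).surjective q
    obtain ⟨g, rfl⟩ := QuotientGroup.mk_surjective p
    exact ⟨g, hp⟩
  have hcenN : Subgroup.center (PresentedGroup (torusRel a b)) = NN a b := by
    apply le_antisymm
    · intro g hg
      have hq : phi a b g ∈ Subgroup.center (PresentedGroup (freeProdRel a b)) := by
        rw [Subgroup.mem_center_iff]
        intro q
        obtain ⟨g', rfl⟩ := hsurj q
        rw [← map_mul, ← map_mul, Subgroup.mem_center_iff.1 hg g']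
      have h1 : phi a b g = 1 := center_Q_trivial a b ha hb _ hq
      have h3 : (QuotientGroup.mk g : PresentedGroup (torusRel a b) ⧸ NN a b) = 1 := by
        apply (e0 a b).injective
        rw [map_one]
        exact h1
      exact (QuotientGroup.eq_one_iff g).1 h3
    · exact NN_le_center a b
  refine ⟨hcenN, ⟨(QuotientGroup.quotientMulEquivOfEq hcenN).trans (e0 a b)⟩⟩
end

section
/- For every pair (p, q) of coprime integers with q ≠ 0 and every pair (ℓ, m) of coprime integers containing a common Farey neighbor path, there exists a finite path of triangles f₁, …, f_k (k ≥ 4) in the Farey tessellation of H² such that consecutive triangles share an edge, the vertex of f₁ not in f₂ is 0/1, the vertex of f_k not in f_{k−1} is p/q, and ℓ/m is a vertex of some f_i. -/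
/-- Two primitive integer vectors represent the same Farey vertex (slope) iff they
agree up to sign. -/
def SameSlope (v w : ℤ × ℤ) : Prop := v = w ∨ v = (-w.1, -w.2)

/-- A triangle of the Farey tessellation of `ℍ²`: three slopes, given by primitive
integer vectors, pairwise joined by Farey edges (`|determinant| = 1`). -/
structure FareyTriangle where
  v : Fin 3 → ℤ × ℤ
  prim : ∀ i, IsCoprime (v i).1 (v i).2
  edge : ∀ i j, i ≠ j → |(v i).1 * (v j).2 - (v i).2 * (v j).1| = 1

/-- A slope occurs as a vertex of a Farey triangle. -/
def FareyTriangle.HasVertex (f : FareyTriangle) (w : ℤ × ℤ) : Prop :=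
  ∃ i, SameSlope (f.v i) w

/-- Two Farey triangles share an edge: they have two common vertices. -/
def SharesEdge (f g : FareyTriangle) : Prop :=
  ∃ i j, i ≠ j ∧ g.HasVertex (f.v i) ∧ g.HasVertex (f.v j)

lemma absEq1 {x : ℤ} (h : x = 1 ∨ x = -1) : |x| = 1 := by rcases h with rfl | rfl <;> norm_num

def tri (a b c d : ℤ) (h : a * d - b * c = 1) : FareyTriangle where
  v := ![(a, c), (b, d), (a + b, c + d)]
  prim := by
    intro i
    fin_cases i
    · exact ⟨d, -b, show d * a + -b * c = 1 by linear_combination h⟩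
    · exact ⟨-c, a, show -c * b + a * d = 1 by linear_combination h⟩
    · exact ⟨d, -b, show d * (a + b) + -b * (c + d) = 1 by linear_combination h⟩
  edge := by
    intro i j hij
    fin_cases i <;> fin_cases j
    · exact absurd rfl hij
    · apply absEq1; left; show a * d - c * b = 1; linear_combination h
    · apply absEq1; left; show a * (c + d) - c * (a + b) = 1; linear_combination h
    · apply absEq1; right; show b * c - d * a = -1; linear_combination -h
    · exact absurd rfl hij
    · apply absEq1; right; show b * (c + d) - d * (a + b) = -1; linear_combination -h
    · apply absEq1; right; show (a + b) * c - (c + d) * a = -1; linear_combination -h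
    · apply absEq1; left; show (a + b) * d - (c + d) * b = 1; linear_combination h
    · exact absurd rfl hij

lemma sameSlope_symm {v w : ℤ × ℤ} (h : SameSlope v w) : SameSlope w v := by
  obtain ⟨v1, v2⟩ := v; obtain ⟨w1, w2⟩ := w
  simp only [SameSlope, Prod.mk.injEq] at *
  omega

lemma sameSlope_trans {u v w : ℤ × ℤ} (h1 : SameSlope u v) (h2 : SameSlope v w) :
    SameSlope u w := by
  obtain ⟨u1, u2⟩ := u; obtain ⟨v1, v2⟩ := v; obtain ⟨w1, w2⟩ := w
  simp only [SameSlope, Prod.mk.injEq] at *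
  omega

lemma sameSlope_det {u w : ℤ × ℤ} (h : SameSlope u w) : u.1 * w.2 - u.2 * w.1 = 0 := by
  rcases h with rfl | h
  · ring
  · rw [h]; show -w.1 * w.2 - -w.2 * w.1 = 0; ring

lemma no_slope {x y P Q : ℤ} (hne : x * Q - y * P ≠ 0) : ¬ SameSlope (x, y) (P, Q) := by
  rintro (h | h) <;> rw [Prod.ext_iff] at h <;> obtain ⟨h1, h2⟩ := h <;> apply hne <;>
    simp only [] at h1 h2 <;> rw [h1, h2] <;> ring

lemma sharesEdge_self (f : FareyTriangle) : SharesEdge f f :=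
  ⟨0, 1, by decide, ⟨0, Or.inl rfl⟩, ⟨1, Or.inl rfl⟩⟩

lemma sharesEdge_symm {f g : FareyTriangle} (h : SharesEdge f g) : SharesEdge g f := by
  obtain ⟨i, j, hij, ⟨i', hi'⟩, ⟨j', hj'⟩⟩ := h
  refine ⟨i', j', ?_, ⟨i, sameSlope_symm hi'⟩, ⟨j, sameSlope_symm hj'⟩⟩
  intro e
  subst e
  have hs : SameSlope (f.v i) (f.v j) :=
    sameSlope_trans (sameSlope_symm hi') hj'
  have h0 := sameSlope_det hs
  have h1 := f.edge i j hij
  rw [h0] at h1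
  norm_num at h1

structure TPath where
  n : ℕ
  F : ℕ → FareyTriangle
  chain : ∀ i, i < n → SharesEdge (F i) (F (i + 1))

def TPath.single (t : FareyTriangle) : TPath :=
  ⟨0, fun _ => t, fun i h => absurd h (Nat.not_lt_zero i)⟩

def TPath.cons (t : FareyTriangle) (P : TPath) (hS : SharesEdge t (P.F 0)) : TPath where
  n := P.n + 1
  F := fun i => match i with | 0 => t | (j + 1) => P.F j
  chain := by
    intro i hi
    match i with
    | 0 => exact hS
    | (j + 1) => exact P.chain j (by omega)

def TPath.append (P Q : TPath) (h : SharesEdge (P.F P.n) (Q.F 0)) : TPath where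
  n := P.n + 1 + Q.n
  F := fun i => if i ≤ P.n then P.F i else Q.F (i - (P.n + 1))
  chain := by
    intro i hi
    try dsimp only
    by_cases h1 : i + 1 ≤ P.n
    · rw [if_pos (by omega), if_pos h1]
      exact P.chain i (by omega)
    · by_cases h2 : i ≤ P.n
      · have e : i = P.n := by omega
        subst e
        rw [if_pos le_rfl, if_neg (by omega)]
        simpa using h
      · rw [if_neg h2, if_neg (by omega)]
        have e : i + 1 - (P.n + 1) = (i - (P.n + 1)) + 1 := by omega
        rw [e]
        exact Q.chain _ (by omega)

lemma TPath.append_n (P Q : TPath) (h) : (P.append Q h).n = P.n + 1 + Q.n := rfl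

lemma TPath.append_left (P Q : TPath) (h) {k : ℕ} (hk : k ≤ P.n) :
    (P.append Q h).F k = P.F k := if_pos hk

lemma TPath.append_right (P Q : TPath) (h) (k : ℕ) :
    (P.append Q h).F (P.n + 1 + k) = Q.F k := by
  show (if _ ≤ _ then _ else _) = _
  rw [if_neg (by omega)]
  congr 1
  omega

lemma TPath.append_last (P Q : TPath) (h) :
    (P.append Q h).F ((P.append Q h).n) = Q.F Q.n := TPath.append_right P Q h Q.n

def TPath.reverse (P : TPath) : TPath where
  n := P.n
  F := fun i => P.F (P.n - i)
  chain := by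
    intro i hi
    try dsimp only
    have e : P.n - i = (P.n - (i + 1)) + 1 := by omega
    rw [e]
    exact sharesEdge_symm (P.chain (P.n - (i + 1)) (by omega))

lemma TPath.reverse_zero (P : TPath) : P.reverse.F 0 = P.F P.n := rfl
lemma TPath.reverse_n (P : TPath) : P.reverse.n = P.n := rfl
lemma TPath.reverse_last (P : TPath) : P.reverse.F P.n = P.F 0 := by
  show P.F (P.n - P.n) = P.F 0
  rw [Nat.sub_self]
lemma pair_eq {x1 x2 y1 y2 : ℤ} (h1 : x1 = y1) (h2 : x2 = y2) : (x1, x2) = (y1, y2) := by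
  rw [h1, h2]

-- move lemmas: SharesEdge (tri a b c d) (tri a' b' c' d') for the five column operations
lemma shares_T {a b c d a' b' c' d' : ℤ} (h : a * d - b * c = 1) (h' : a' * d' - b' * c' = 1)
    (e1 : a' = a) (e2 : b' = a + b) (e3 : c' = c) (e4 : d' = c + d) :
    SharesEdge (tri a b c d h) (tri a' b' c' d' h') :=
  ⟨0, 2, by decide, ⟨0, Or.inl (show (a', c') = (a, c) from pair_eq (by linarith) (by linarith))⟩,
    ⟨1, Or.inl (show (b', d') = (a + b, c + d) from pair_eq (by linarith) (by linarith))⟩⟩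

lemma shares_Tinv {a b c d a' b' c' d' : ℤ} (h : a * d - b * c = 1) (h' : a' * d' - b' * c' = 1)
    (e1 : a' = a) (e2 : b' = b - a) (e3 : c' = c) (e4 : d' = d - c) :
    SharesEdge (tri a b c d h) (tri a' b' c' d' h') :=
  ⟨0, 1, by decide, ⟨0, Or.inl (show (a', c') = (a, c) from pair_eq (by linarith) (by linarith))⟩,
    ⟨2, Or.inl (show (a' + b', c' + d') = (b, d) from pair_eq (by linarith) (by linarith))⟩⟩

lemma shares_L {a b c d a' b' c' d' : ℤ} (h : a * d - b * c = 1) (h' : a' * d' - b' * c' = 1)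
    (e1 : a' = a + b) (e2 : b' = b) (e3 : c' = c + d) (e4 : d' = d) :
    SharesEdge (tri a b c d h) (tri a' b' c' d' h') :=
  ⟨2, 1, by decide, ⟨0, Or.inl (show (a', c') = (a + b, c + d) from pair_eq (by linarith) (by linarith))⟩,
    ⟨1, Or.inl (show (b', d') = (b, d) from pair_eq (by linarith) (by linarith))⟩⟩

lemma shares_Linv {a b c d a' b' c' d' : ℤ} (h : a * d - b * c = 1) (h' : a' * d' - b' * c' = 1)
    (e1 : a' = a - b) (e2 : b' = b) (e3 : c' = c - d) (e4 : d' = d) :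
    SharesEdge (tri a b c d h) (tri a' b' c' d' h') :=
  ⟨1, 0, by decide, ⟨1, Or.inl (show (b', d') = (b, d) from pair_eq (by linarith) (by linarith))⟩,
    ⟨2, Or.inl (show (a' + b', c' + d') = (a, c) from pair_eq (by linarith) (by linarith))⟩⟩

lemma shares_S {a b c d a' b' c' d' : ℤ} (h : a * d - b * c = 1) (h' : a' * d' - b' * c' = 1)
    (e1 : a' = b) (e2 : b' = -a) (e3 : c' = d) (e4 : d' = -c) :
    SharesEdge (tri a b c d h) (tri a' b' c' d' h') :=
  ⟨1, 0, by decide, ⟨0, Or.inl (show (a', c') = (b, d) from pair_eq (by linarith) (by linarith))⟩,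
    ⟨1, Or.inr (show (b', d') = (-a, -c) from pair_eq (by linarith) (by linarith))⟩⟩

def Reach (a b c d : ℤ) : Prop :=
  ∃ (h : a * d - b * c = 1) (P : TPath),
    P.F 0 = tri a b c d h ∧ P.F P.n = tri 1 0 0 1 (by norm_num)

lemma reach_base : Reach 1 0 0 1 :=
  ⟨by norm_num, TPath.single (tri 1 0 0 1 (by norm_num)), rfl, rfl⟩

lemma Reach.step {a b c d a' b' c' d' : ℤ} (h : a * d - b * c = 1) (h' : a' * d' - b' * c' = 1)
    (hs : SharesEdge (tri a b c d h) (tri a' b' c' d' h'))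
    (hr : Reach a' b' c' d') : Reach a b c d := by
  obtain ⟨h'', P, h0, hn⟩ := hr
  have h0' : P.F 0 = tri a' b' c' d' h' := h0
  refine ⟨h, TPath.cons (tri a b c d h) P (by rw [h0']; exact hs), rfl, ?_⟩
  show P.F P.n = _
  exact hn

lemma base_pos : ∀ n : ℕ, ∀ c : ℤ, c.natAbs ≤ n → Reach 1 0 c 1 := by
  intro n
  induction n with
  | zero =>
    intro c hc
    have : c = 0 := by omega
    subst this
    exact reach_base
  | succ n ih =>
    intro c hc
    rcases lt_trichotomy c 0 with h0 | h0 | h0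
    · exact Reach.step (by ring) (by ring)
        (shares_L (by ring) (by ring) (by ring) rfl (by ring) rfl) (ih (c + 1) (by omega))
    · subst h0; exact reach_base
    · exact Reach.step (by ring) (by ring)
        (shares_Linv (by ring) (by ring) (by ring) rfl (by ring) rfl) (ih (c - 1) (by omega))

lemma base_neg (c : ℤ) : Reach (-1) 0 c (-1) := by
  have s1 : Reach 0 1 (-1) (-c) → Reach (-1) 0 c (-1) :=
    Reach.step (by ring) (by ring) (shares_S (by ring) (by ring) rfl (by ring) rfl rfl)
  have s2 : Reach 1 0 (-c) 1 → Reach 0 1 (-1) (-c) :=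
    Reach.step (by ring) (by ring) (shares_S (by ring) (by ring) rfl (by ring) (by ring) (by ring))
  exact s1 (s2 (base_pos _ (-c) le_rfl))

lemma reach_all : ∀ n : ℕ, ∀ a b c d : ℤ, a.natAbs + b.natAbs ≤ n → a * d - b * c = 1 →
    Reach a b c d := by
  intro n
  induction n with
  | zero =>
    intro a b c d hle h
    have ha : a = 0 := by omega
    have hb : b = 0 := by omega
    subst ha hb
    simp at h
  | succ n ih =>
    intro a b c d hle h
    by_cases hb : b = 0
    · subst hb
      have had : a * d = 1 := by linarith
      rcases Int.mul_eq_one_iff_eq_one_or_neg_one.mp had with ⟨ha1, hd1⟩ | ⟨ha1, hd1⟩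
      · subst ha1 hd1
        exact base_pos _ c le_rfl
      · subst ha1 hd1
        exact base_neg c
    · by_cases ha : a = 0
      · subst ha
        have hbc : b * (-c) = 1 := by linarith
        rcases Int.mul_eq_one_iff_eq_one_or_neg_one.mp hbc with ⟨hb1, hc1⟩ | ⟨hb1, hc1⟩
        · subst hb1
          have hc : c = -1 := by omega
          subst hc
          exact Reach.step h (by ring)
            (shares_S h (by ring) rfl (by ring) rfl (by ring)) (base_pos _ d le_rfl)
        · subst hb1
          have hc : c = 1 := by omega
          subst hc
          exact Reach.step h (by ring)
            (shares_S h (by ring) rfl (by ring) rfl (by ring)) (base_neg d)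
      · by_cases hab : a.natAbs ≤ b.natAbs
        · -- reduce |b|
          have hch : (b - a).natAbs < b.natAbs ∨ (b + a).natAbs < b.natAbs := by omega
          rcases hch with hlt | hlt
          · exact Reach.step h (by linear_combination h)
              (shares_Tinv h (by linear_combination h) rfl rfl rfl rfl)
              (ih a (b - a) c (d - c) (by omega) (by linear_combination h))
          · exact Reach.step h (by linear_combination h)
              (shares_T h (by linear_combination h) rfl rfl rfl rfl)
              (ih a (a + b) c (c + d) (by omega) (by linear_combination h))
        · -- reduce |a|
          have hch : (a - b).natAbs < a.natAbs ∨ (a + b).natAbs < a.natAbs := by omega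
          rcases hch with hlt | hlt
          · exact Reach.step h (by linear_combination h)
              (shares_Linv h (by linear_combination h) rfl rfl rfl rfl)
              (ih (a - b) b (c - d) d (by omega) (by linear_combination h))
          · exact Reach.step h (by linear_combination h)
              (shares_L h (by linear_combination h) rfl rfl rfl rfl)
              (ih (a + b) b (c + d) d (by omega) (by linear_combination h))

lemma assemble (t0 t1 tN tM tM' tI : FareyTriangle) (P1 P2 P3 P4 : TPath)
    (h1s : P1.F 0 = t1) (h1e : P1.F P1.n = tI)
    (h2s : P2.F 0 = tI) (h2e : P2.F P2.n = tN)
    (h3s : P3.F 0 = tN) (h3e : P3.F P3.n = tI)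
    (h4s : P4.F 0 = tI) (h4e : P4.F P4.n = tM')
    (g01 : SharesEdge t0 t1) (gMe : SharesEdge tM' tM) :
    ∃ (k : ℕ) (f : ℕ → FareyTriangle), 4 ≤ k ∧
      (∀ i, i + 1 < k → SharesEdge (f i) (f (i + 1))) ∧
      f 0 = t0 ∧ f 1 = t1 ∧ f (k - 1) = tM ∧ f (k - 2) = tM' ∧
      (∃ i, i < k ∧ f i = tN) := by
  have gl01 : SharesEdge ((TPath.single t0).F (TPath.single t0).n) (P1.F 0) := by
    rw [h1s]; exact g01
  set A1 := (TPath.single t0).append P1 gl01 with hA1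
  have hn1 : A1.n = 0 + 1 + P1.n := rfl
  have gl12 : SharesEdge (A1.F A1.n) (P2.F 0) := by
    rw [hA1, TPath.append_last, h1e, h2s]; exact sharesEdge_self tI
  set A2 := A1.append P2 gl12 with hA2
  have hn2 : A2.n = A1.n + 1 + P2.n := rfl
  have gl23 : SharesEdge (A2.F A2.n) (P3.F 0) := by
    rw [hA2, TPath.append_last, h2e, h3s]; exact sharesEdge_self tN
  set A3 := A2.append P3 gl23 with hA3
  have hn3 : A3.n = A2.n + 1 + P3.n := rfl
  have gl34 : SharesEdge (A3.F A3.n) (P4.F 0) := by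
    rw [hA3, TPath.append_last, h3e, h4s]; exact sharesEdge_self tI
  set A4 := A3.append P4 gl34 with hA4
  have hn4 : A4.n = A3.n + 1 + P4.n := rfl
  have gl45 : SharesEdge (A4.F A4.n) ((TPath.single tM).F 0) := by
    rw [hA4, TPath.append_last, h4e]; exact gMe
  set A5 := A4.append (TPath.single tM) gl45 with hA5
  have hn5 : A5.n = A4.n + 1 + 0 := rfl
  -- f 0
  have B1a : A1.F 0 = t0 := by
    rw [hA1, TPath.append_left (TPath.single t0) P1 gl01 (Nat.zero_le _)]
    rfl
  have B2a : A2.F 0 = t0 := by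
    rw [hA2, TPath.append_left A1 P2 gl12 (Nat.zero_le _)]; exact B1a
  have B3a : A3.F 0 = t0 := by
    rw [hA3, TPath.append_left A2 P3 gl23 (Nat.zero_le _)]; exact B2a
  have B4a : A4.F 0 = t0 := by
    rw [hA4, TPath.append_left A3 P4 gl34 (Nat.zero_le _)]; exact B3a
  have B5a : A5.F 0 = t0 := by
    rw [hA5, TPath.append_left A4 (TPath.single tM) gl45 (Nat.zero_le _)]; exact B4a
  -- f 1
  have B1b : A1.F 1 = t1 := by
    have := TPath.append_right (TPath.single t0) P1 gl01 0
    rw [h1s] at this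
    exact this
  have B2b : A2.F 1 = t1 := by
    rw [hA2, TPath.append_left A1 P2 gl12 (by omega)]; exact B1b
  have B3b : A3.F 1 = t1 := by
    rw [hA3, TPath.append_left A2 P3 gl23 (by omega)]; exact B2b
  have B4b : A4.F 1 = t1 := by
    rw [hA4, TPath.append_left A3 P4 gl34 (by omega)]; exact B3b
  have B5b : A5.F 1 = t1 := by
    rw [hA5, TPath.append_left A4 (TPath.single tM) gl45 (by omega)]; exact B4b
  -- middle tN at index A2.n
  have C2 : A2.F A2.n = tN := by rw [hA2, TPath.append_last]; exact h2e
  have C3 : A3.F A2.n = tN := by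
    rw [hA3, TPath.append_left A2 P3 gl23 (le_refl _)]; exact C2
  have C4 : A4.F A2.n = tN := by
    rw [hA4, TPath.append_left A3 P4 gl34 (by omega)]; exact C3
  have C5 : A5.F A2.n = tN := by
    rw [hA5, TPath.append_left A4 (TPath.single tM) gl45 (by omega)]; exact C4
  -- f (k-2) = tM'
  have D4 : A4.F A4.n = tM' := by rw [hA4, TPath.append_last]; exact h4e
  have D5 : A5.F A4.n = tM' := by
    rw [hA5, TPath.append_left A4 (TPath.single tM) gl45 (le_refl _)]; exact D4
  -- f (k-1) = tM
  have E5 : A5.F A5.n = tM := by rw [hA5, TPath.append_last]; rfl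
  refine ⟨A5.n + 1, A5.F, by omega, ?_, B5a, B5b, ?_, ?_, ⟨A2.n, by omega, C5⟩⟩
  · intro i hi
    exact A5.chain i (by omega)
  · have e : A5.n + 1 - 1 = A5.n := by omega
    rw [e]; exact E5
  · have e : A5.n + 1 - 2 = A4.n := by omega
    rw [e]; exact D5


/-- for coprime `p, q` with `q ≠ 0` and coprime `ℓ, m`, there is a path
of triangles `f₁, …, f_k` (`k ≥ 4`) in the Farey tessellation such that consecutive
triangles share an edge, the vertex of `f₁` not in `f₂` is `0/1`, the vertex of `f_k`
not in `f_{k−1}` is `p/q`, and `ℓ/m` is a vertex of some `f_i`. -/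
theorem stmt18 (p q ℓ m : ℤ) (hpq : IsCoprime p q) (hq : q ≠ 0) (hlm : IsCoprime ℓ m) :
    ∃ (k : ℕ) (f : ℕ → FareyTriangle), 4 ≤ k ∧
      (∀ i, i + 1 < k → SharesEdge (f i) (f (i + 1))) ∧
      (∃ i, SameSlope ((f 0).v i) (0, 1) ∧ ¬ (f 1).HasVertex ((f 0).v i)) ∧
      (∃ i, SameSlope ((f (k - 1)).v i) (p, q) ∧ ¬ (f (k - 2)).HasVertex ((f (k - 1)).v i)) ∧
      (∃ i, i < k ∧ (f i).HasVertex (ℓ, m)) := by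
  obtain ⟨x1, y1, hxy1⟩ := hpq
  obtain ⟨x2, y2, hxy2⟩ := hlm
  have hM : p * x1 - (-y1) * q = 1 := by linear_combination hxy1
  have hN : ℓ * x2 - (-y2) * m = 1 := by linear_combination hxy2
  have hM' : (p + -y1) * x1 - (-y1) * (q + x1) = 1 := by linear_combination hxy1
  have h0det : (0 : ℤ) * 0 - (-1) * 1 = 1 := by norm_num
  obtain ⟨hd1, P1, P1s, P1e⟩ := reach_all _ (-1) (-1) 1 0 le_rfl (by norm_num)
  obtain ⟨hdN, PN, PNs, PNe⟩ := reach_all _ ℓ (-y2) m x2 le_rfl hN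
  obtain ⟨hdM, PM, PMs, PMe⟩ := reach_all _ (p + -y1) (-y1) (q + x1) x1 le_rfl hM'
  obtain ⟨k, f, hk, hchain, hf0, hf1, hfk1, hfk2, i0, hi0, hfi0⟩ :=
    assemble (tri 0 (-1) 1 0 h0det) (tri (-1) (-1) 1 0 hd1) (tri ℓ (-y2) m x2 hdN)
      (tri p (-y1) q x1 hM) (tri (p + -y1) (-y1) (q + x1) x1 hdM) (tri 1 0 0 1 (by norm_num))
      P1 PN.reverse PN PM.reverse
      P1s P1e
      ((TPath.reverse_zero PN).trans PNe)
      ((TPath.reverse_last PN).trans PNs)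
      PNs PNe
      ((TPath.reverse_zero PM).trans PMe)
      ((TPath.reverse_last PM).trans PMs)
      (shares_L h0det hd1 (by norm_num) (by norm_num) (by norm_num) (by norm_num))
      (sharesEdge_symm (shares_L hM hdM rfl rfl rfl rfl))
  refine ⟨k, f, hk, hchain, ?_, ?_, ⟨i0, hi0, ?_⟩⟩
  · rw [hf0, hf1]
    refine ⟨0, Or.inl rfl, ?_⟩
    rintro ⟨i, hi⟩
    fin_cases i
    · exact no_slope (x := -1) (y := 1) (P := 0) (Q := 1) (by norm_num) hi
    · exact no_slope (x := -1) (y := 0) (P := 0) (Q := 1) (by norm_num) hi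
    · exact no_slope (x := -1 + -1) (y := 1 + 0) (P := 0) (Q := 1) (by norm_num) hi
  · rw [hfk1, hfk2]
    refine ⟨0, Or.inl rfl, ?_⟩
    rintro ⟨i, hi⟩
    fin_cases i
    · refine no_slope (x := p + -y1) (y := q + x1) (P := p) (Q := q) ?_ hi
      intro e; linarith [hxy1]
    · refine no_slope (x := -y1) (y := x1) (P := p) (Q := q) ?_ hi
      intro e; linarith [hxy1]
    · refine no_slope (x := p + -y1 + -y1) (y := q + x1 + x1) (P := p) (Q := q) ?_ hi
      intro e; linarith [hxy1]
  · rw [hfi0]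
    exact ⟨0, Or.inl rfl⟩
end
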